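/- Let g : [0, a) → ℝ (with 0 < a ≤ ∞) be differentiable with g(0) = 0, g(x) ≥ x and 0 ≤ g(x) < a for all x ∈ [0, a), satisfying g'(t) = exp(g(g(t))) for all t. Then for every x ∈ [0, a), x = ∫₀^{g(x)} exp(-g(s)) ds, and consequently x ≤ 1 for all x ∈ [0, a); hence a ≤ 1 or g is bounded, and in particular a = +∞ is impossible. -/

import Mathlib

open scoped ENNReal

/-- Let `g` be differentiable on `[0, a)` (with `0 < a ≤ ∞`), `g 0 = 0`, `g x ≥ x` and
`0 ≤ g x < a` on `[0, a)`, satisfying `g' t = exp (g (g t))`.  Then for every `x ∈ [0, a)`,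
`x = ∫₀^{g x} exp (-g s) ds`, hence `x ≤ 1`; consequently `a ≤ 1` and in particular
`a = +∞` is impossible. -/
theorem stmt_5 (a : ℝ≥0∞) (ha : 0 < a) (g : ℝ → ℝ)
    (hg0 : g 0 = 0)
    (hge : ∀ x : ℝ, 0 ≤ x → ENNReal.ofReal x < a → x ≤ g x)
    (hmaps : ∀ x : ℝ, 0 ≤ x → ENNReal.ofReal x < a → 0 ≤ g x ∧ ENNReal.ofReal (g x) < a)
    (hderiv : ∀ t : ℝ, 0 ≤ t → ENNReal.ofReal t < a →
      HasDerivWithinAt g (Real.exp (g (g t))) (Set.Ici 0) t) :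
    (∀ x : ℝ, 0 ≤ x → ENNReal.ofReal x < a →
        x = ∫ s in (0 : ℝ)..(g x), Real.exp (-(g s)) ∧ x ≤ 1) ∧
    a ≤ 1 ∧ a ≠ ⊤ := by
  -- continuity of g on Icc 0 c for any c in the domain
  have hcont : ∀ c : ℝ, 0 ≤ c → ENNReal.ofReal c < a → ContinuousOn g (Set.Icc 0 c) := by
    intro c hc hca t ht
    have htd : ENNReal.ofReal t < a := lt_of_le_of_lt (ENNReal.ofReal_le_ofReal ht.2) hca
    exact ((hderiv t ht.1 htd).continuousWithinAt).mono (fun u hu => hu.1)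
  have key : ∀ x : ℝ, 0 ≤ x → ENNReal.ofReal x < a →
      x = (∫ s in (0 : ℝ)..(g x), Real.exp (-(g s))) ∧ x ≤ 1 := by
    intro x hx hxa
    obtain ⟨hgx0, hgxa⟩ := hmaps x hx hxa
    -- max of g on Icc 0 x
    obtain ⟨t₀, ht₀, hmax⟩ := (isCompact_Icc (a := (0:ℝ)) (b := x)).exists_isMaxOn
      (Set.nonempty_Icc.2 hx) (hcont x hx hxa)
    set M := g t₀ with hM
    have hMd : 0 ≤ M ∧ ENNReal.ofReal M < a :=
      hmaps t₀ ht₀.1 (lt_of_le_of_lt (ENNReal.ofReal_le_ofReal ht₀.2) hxa)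
    set b := max x M with hb
    have hb0 : 0 ≤ b := le_trans hx (le_max_left _ _)
    have hba : ENNReal.ofReal b < a := by
      rcases max_cases x M with ⟨h, _⟩ | ⟨h, _⟩
      · rw [hb, h]; exact hxa
      · rw [hb, h]; exact hMd.2
    have hgb : ContinuousOn g (Set.Icc 0 b) := hcont b hb0 hba
    have himg : g '' Set.Icc 0 x ⊆ Set.Icc 0 b := by
      rintro _ ⟨t, ht, rfl⟩
      refine ⟨(hmaps t ht.1 (lt_of_le_of_lt (ENNReal.ofReal_le_ofReal ht.2) hxa)).1, ?_⟩
      exact le_trans (hmax ht) (le_max_right _ _)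
    have hIcc : Set.uIcc (0:ℝ) x = Set.Icc 0 x := Set.uIcc_of_le hx
    have hgcx : ContinuousOn g (Set.Icc 0 x) := hcont x hx hxa
    have hgg : ContinuousOn (fun t => g (g t)) (Set.Icc 0 x) :=
      hgb.comp hgcx (fun t ht => himg ⟨t, ht, rfl⟩)
    -- change of variables
    have hsub : (∫ t in (0:ℝ)..x, Real.exp (g (g t)) •
          ((fun u => Real.exp (-(g u))) ∘ g) t) = ∫ u in (0:ℝ)..(g x), Real.exp (-(g u)) := by
      have := intervalIntegral.integral_comp_smul_deriv''
        (f := g) (f' := fun t => Real.exp (g (g t))) (g := fun u => Real.exp (-(g u)))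
        (a := 0) (b := x)
        (by rw [hIcc]; exact hgcx)
        (by
          intro t ht
          rw [min_def, max_def] at ht
          simp only [if_pos hx] at ht
          have ht' : ENNReal.ofReal t < a :=
            lt_of_le_of_lt (ENNReal.ofReal_le_ofReal ht.2.le) hxa
          exact (hderiv t ht.1.le ht').mono (fun u hu => le_of_lt (lt_of_le_of_lt ht.1.le hu)))
        (by rw [hIcc]; exact (Real.continuous_exp.comp_continuousOn hgg))
        (by
          rw [hIcc]
          refine Real.continuous_exp.comp_continuousOn ((hgb.mono ?_).neg)
          exact himg)
      rw [hg0] at this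
      exact this
    have hx_eq : x = ∫ u in (0:ℝ)..(g x), Real.exp (-(g u)) := by
      rw [← hsub]
      have : ∀ t : ℝ, Real.exp (g (g t)) • ((fun u => Real.exp (-(g u))) ∘ g) t = 1 := by
        intro t
        simp [Function.comp, smul_eq_mul, ← Real.exp_add]
      simp only [this]
      simp
    refine ⟨hx_eq, ?_⟩
    -- bound the integral
    have hint1 : IntervalIntegrable (fun s => Real.exp (-(g s))) MeasureTheory.volume 0 (g x) := by
      apply ContinuousOn.intervalIntegrable
      rw [Set.uIcc_of_le hgx0]
      refine Real.continuous_exp.comp_continuousOn ((hgb.mono ?_).neg)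
      intro s hs
      exact ⟨hs.1, le_trans hs.2 (le_trans (hmax ⟨hx, le_refl x⟩) (le_max_right _ _))⟩
    have hint2 : IntervalIntegrable (fun s => Real.exp (-s)) MeasureTheory.volume 0 (g x) :=
      (Real.continuous_exp.comp continuous_neg).intervalIntegrable _ _
    have hmono : (∫ s in (0:ℝ)..(g x), Real.exp (-(g s))) ≤ ∫ s in (0:ℝ)..(g x), Real.exp (-s) := by
      apply intervalIntegral.integral_mono_on hgx0 hint1 hint2
      intro s hs
      have hsd : ENNReal.ofReal s < a := lt_of_le_of_lt (ENNReal.ofReal_le_ofReal hs.2) hgxa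
      exact Real.exp_le_exp.2 (neg_le_neg (hge s hs.1 hsd))
    have hcalc : (∫ s in (0:ℝ)..(g x), Real.exp (-s)) = 1 - Real.exp (-(g x)) := by
      have hderiv' : ∀ s ∈ Set.uIcc (0:ℝ) (g x),
          HasDerivAt (fun u => -Real.exp (-u)) (Real.exp (-s)) s := by
        intro s _
        have h := ((hasDerivAt_neg s).exp).neg
        simp only [mul_neg, mul_one, neg_neg] at h
        exact h
      rw [intervalIntegral.integral_eq_sub_of_hasDerivAt hderiv' hint2]
      simp
      ring
    calc x = ∫ u in (0:ℝ)..(g x), Real.exp (-(g u)) := hx_eq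
      _ ≤ 1 - Real.exp (-(g x)) := by rw [← hcalc]; exact hmono
      _ ≤ 1 := by linarith [Real.exp_pos (-(g x))]
  have hle : a ≤ 1 := by
    by_contra h
    push_neg at h
    obtain ⟨q, h1q, hqa⟩ := exists_between h
    have hqt : q ≠ ⊤ := hqa.ne_top
    have hx0 : (0:ℝ) ≤ q.toReal := ENNReal.toReal_nonneg
    have hxa : ENNReal.ofReal q.toReal < a := by rw [ENNReal.ofReal_toReal hqt]; exact hqa
    have h1x : (1:ℝ) < q.toReal := by
      rw [← ENNReal.toReal_one]
      exact (ENNReal.toReal_lt_toReal (by simp) hqt).2 h1q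
    linarith [(key q.toReal hx0 hxa).2]
  exact ⟨key, hle, fun h => by rw [h] at hle; exact absurd hle (by simp)⟩
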